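/- The infinite word τ^ω(0) obtained by iterating the morphism τ with τ(0)=012, τ(1)=02, τ(2)=1 starting from 0 (the Thue word) is square-free. -/

import Mathlib

/-- An infinite word `w : ℕ → α` is square-free if it contains no square `uu`
with `u` nonempty, i.e. there are no positions `m, k` with `0 < k` and
`w (m+i) = w (m+k+i)` for all `i < k`. -/
def InfSqFree {α : Type*} (w : ℕ → α) : Prop :=
  ∀ m k, 0 < k → ∃ i < k, w (m + i) ≠ w (m + k + i)

/-- The Thue morphism `τ(0)=012`, `τ(1)=02`, `τ(2)=1`. -/
def tau : Fin 3 → List (Fin 3)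
  | 0 => [0, 1, 2]
  | 1 => [0, 2]
  | 2 => [1]

/-- The Thue word `τ^ω(0)`, the infinite fixed point obtained by iterating `τ`
starting from the letter `0` (the `n`-th letter is the `n`-th letter of
`τ^(n+1)(0)`, which is a prefix of all later iterates). -/
def thue (n : ℕ) : Fin 3 := ((fun l => l.flatMap tau)^[n + 1] [0]).getD n 0

/-! ### Auxiliary: the Thue–Morse sequence and its overlap-freeness -/

/-- The Thue–Morse sequence. -/
def tm : ℕ → Bool
  | 0 => false
  | n + 1 => xor ((n + 1) % 2 == 1) (tm ((n + 1) / 2))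
decreasing_by exact Nat.div_lt_self (Nat.succ_pos n) one_lt_two

lemma tm_zero : tm 0 = false := by simp [tm]

lemma tm_one : tm 1 = true := by rw [tm]; norm_num [tm]

lemma tm_two_mul (n : ℕ) : tm (2 * n) = tm n := by
  cases n with
  | zero => rfl
  | succ n =>
    rw [show 2 * (n+1) = (2*n+1)+1 by ring, tm]
    have h1 : ((2*n+1+1) % 2 == 1) = false := by simp; omega
    have h2 : (2*n+1+1) / 2 = n + 1 := by omega
    rw [h1, h2]; simp

lemma tm_two_mul_add_one (n : ℕ) : tm (2 * n + 1) = !tm n := by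
  rw [show 2*n+1 = (2*n)+1 by ring, tm]
  have h1 : ((2*n+1) % 2 == 1) = true := by simp
  have h2 : (2*n+1) / 2 = n := by omega
  rw [h1, h2]; simp [Bool.xor_comm]

lemma tm_eq_succ_odd (i : ℕ) (h : tm i = tm (i + 1)) : i % 2 = 1 := by
  rcases Nat.even_or_odd i with ⟨j, rfl⟩ | ⟨j, rfl⟩
  · exfalso
    rw [show j + j = 2 * j by ring] at h
    rw [tm_two_mul, tm_two_mul_add_one] at h
    simp at h
  · omega

/-- The Thue–Morse sequence is overlap-free. -/
theorem tm_no_overlap : ∀ k, 0 < k → ∀ m, ¬ (∀ j ≤ k, tm (m + j) = tm (m + k + j)) := by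
  intro k
  induction k using Nat.strong_induction_on with
  | _ k ih =>
    intro hk m H
    rcases Nat.even_or_odd k with ⟨k', rfl⟩ | hodd
    · -- even case: k = k' + k'
      have hk' : 0 < k' := by omega
      rcases Nat.even_or_odd m with ⟨m', rfl⟩ | ⟨m', rfl⟩
      · refine ih k' (by omega) hk' m' ?_
        intro j hj
        have h := H (2 * j) (by omega)
        rw [show m' + m' + 2 * j = 2 * (m' + j) by ring,
            show m' + m' + (k' + k') + 2 * j = 2 * (m' + k' + j) by ring,
            tm_two_mul, tm_two_mul] at h
        exact h
      · refine ih k' (by omega) hk' m' ?_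
        intro j hj
        have h := H (2 * j) (by omega)
        rw [show 2 * m' + 1 + 2 * j = 2 * (m' + j) + 1 by ring,
            show 2 * m' + 1 + (k' + k') + 2 * j = 2 * (m' + k' + j) + 1 by ring,
            tm_two_mul_add_one, tm_two_mul_add_one] at h
        simpa using h
    · -- odd case
      by_cases h : ∃ j, j < k ∧ tm (m + j) = tm (m + j + 1)
      · obtain ⟨j, hj, he⟩ := h
        have h1 := tm_eq_succ_odd (m + j) he
        have e1 : tm (m + k + j) = tm (m + k + j + 1) := by
          have a := H j hj.le
          have b := H (j + 1) hj
          rw [show m + (j+1) = m + j + 1 by ring,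
              show m + k + (j+1) = m + k + j + 1 by ring] at b
          rw [← a, he, b]
        have h2 := tm_eq_succ_odd (m + k + j) e1
        obtain ⟨r, hr⟩ := hodd
        omega
      · push_neg at h
        have alt : ∀ j ≤ k, tm (m + j) = xor (decide (j % 2 = 1)) (tm m) := by
          intro j
          induction j with
          | zero => simp
          | succ j ihj =>
            intro hj
            have hne := h j (by omega)
            have hprev := ihj (by omega)
            have hstep : tm (m + j + 1) = !tm (m + j) := by
              cases hx : tm (m + j) <;> cases hy : tm (m + j + 1) <;> simp_all
            rw [show m + (j+1) = m + j + 1 by ring, hstep, hprev]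
            rcases Nat.mod_two_eq_zero_or_one j with hj2 | hj2
            · have hj3 : (j+1) % 2 = 1 := by omega
              simp [hj2, hj3]
            · have hj3 : (j+1) % 2 = 0 := by omega
              simp [hj2, hj3]
        have h0 := H 0 (by omega)
        simp at h0
        have hk2 := alt k le_rfl
        obtain ⟨r, hr⟩ := hodd
        have hk1 : (k % 2 = 1) := by omega
        rw [hk1] at hk2
        simp at hk2
        rw [← h0] at hk2
        exact absurd hk2 (by cases tm m <;> simp)

/-! ### The Thue word in terms of Thue–Morse -/

/-- The letter of the square-free word read off a Thue–Morse pair. -/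
def g (n : ℕ) : Fin 3 := if tm n = tm (n+1) then 1 else if tm n then 2 else 0

def bn (n : ℕ) : ℕ := if tm n then 1 else 0

lemma bn_le (n : ℕ) : bn n ≤ 1 := by unfold bn; split <;> simp

lemma tau_g (n : ℕ) :
    tau (g n) = (List.range' (2*n + bn n) (2 + bn (n+1) - bn n)).map g := by
  have e2 : tm (2*n+2) = tm (n+1) := by
    rw [show 2*n+2 = 2*(n+1) by ring, tm_two_mul]
  have e3 : tm (2*n+3) = !tm (n+1) := by
    rw [show 2*n+3 = 2*(n+1)+1 by ring, tm_two_mul_add_one]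
  have e0 : tm (2*n) = tm n := tm_two_mul n
  have e1 : tm (2*n+1) = !tm n := tm_two_mul_add_one n
  cases ha : tm n <;> cases hb : tm (n+1) <;>
    simp_all [g, bn, tau, List.range']

lemma flat_range (n : ℕ) :
    ((List.range n).map g).flatMap tau = (List.range (2*n + bn n)).map g := by
  induction n with
  | zero => simp [bn, tm_zero]
  | succ n ih =>
    rw [List.range_succ, List.map_append, List.flatMap_append, ih]
    have hsingle : ([g n].flatMap tau) = tau (g n) := by simp
    rw [List.map_singleton] at *
    rw [hsingle, tau_g n, ← List.map_append]
    have hb1 := bn_le n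
    have hb2 := bn_le (n+1)
    have happ : List.range' 0 (2*n + bn n) ++ List.range' (0 + (2*n + bn n)) (2 + bn (n+1) - bn n)
        = List.range' 0 ((2*n + bn n) + (2 + bn (n+1) - bn n)) := by
      have := List.range'_append (s := 0) (m := 2*n + bn n) (n := 2 + bn (n+1) - bn n) (step := 1)
      simpa [Nat.add_comm] using this
    rw [List.range_eq_range', List.range_eq_range']
    rw [show (0 + (2*n + bn n)) = 2*n + bn n from by omega] at happ
    rw [show (2*n + bn n) + (2 + bn (n+1) - bn n) = 2*(n+1) + bn (n+1) by omega] at happ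
    rw [happ]

lemma iter_eq (N : ℕ) :
    ∃ L, ((fun l => l.flatMap tau)^[N] [0]) = (List.range L).map g ∧ N < L := by
  induction N with
  | zero =>
    refine ⟨1, ?_, by omega⟩
    have : g 0 = 0 := by simp [g, tm_zero, tm_one]
    rw [show List.range 1 = [0] from rfl]; simp [this]
  | succ N ih =>
    obtain ⟨L, hL, hlt⟩ := ih
    refine ⟨2*L + bn L, ?_, by omega⟩
    rw [Function.iterate_succ_apply', hL]
    exact flat_range L

lemma thue_eq_g (n : ℕ) : thue n = g n := by
  obtain ⟨L, hL, hlt⟩ := iter_eq (n+1)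
  unfold thue
  rw [hL]
  rw [List.getD_eq_getElem _ _ (by simpa using by omega : n < ((List.range L).map g).length)]
  simp

/-! ### Square-freeness -/

def ti (n : ℕ) : ℤ := if tm n then 1 else 0

lemma ti_bound (n : ℕ) : ti n = 0 ∨ ti n = 1 := by unfold ti; split <;> simp

/-- The Thue word is square-free. -/
theorem thue_squarefree : InfSqFree thue := by
  intro m k hk
  by_contra hcon
  push_neg at hcon
  have key : ∀ i < k, ti (m+i) - ti (m+i+1) = ti (m+k+i) - ti (m+k+i+1) := by
    intro i hi
    have h := hcon i hi
    rw [thue_eq_g, thue_eq_g] at h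
    unfold g at h
    unfold ti
    rcases ha : tm (m+i) <;> rcases hb : tm (m+i+1) <;>
      rcases hc : tm (m+k+i) <;> rcases hd : tm (m+k+i+1) <;>
      simp_all
  have tele : ∀ j ≤ k, ti (m+j) - ti (m+k+j) = ti m - ti (m+k) := by
    intro j
    induction j with
    | zero => simp
    | succ j ihj =>
      intro hj
      have h1 := ihj (by omega)
      have h2 := key j (by omega)
      rw [show m+(j+1) = m+j+1 by ring, show m+k+(j+1) = m+k+j+1 by ring]
      linarith
  by_cases hcz : ti m = ti (m+k)
  · have hov : ∀ j ≤ k, tm (m+j) = tm (m+k+j) := by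
      intro j hj
      have h := tele j hj
      rw [hcz] at h
      have h' : ti (m+j) = ti (m+k+j) := by linarith
      rcases ha : tm (m+j) <;> rcases hb : tm (m+k+j) <;> simp_all [ti]
    exact tm_no_overlap k hk m hov
  · have t1 := tele k le_rfl
    have b1 := ti_bound m
    have b2 := ti_bound (m+k)
    have b3 := ti_bound (m+k+k)
    omega
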